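/- Let f = f_4 x⁴ + f_3 x³ + f_2 x² + f_1 x + f_0 over a field of characteristic 0 with f_0 f_4 ≠ 0. Then for every n ≥ 3, (2n+5)(2n+4) f_4² f^n_{2n-5} = ((n+3)(n+4) f_3² - 3(2n+4) f_2 f_4) f^n_{2n-3} + (2(n+4) f_2 f_3 + (n-2)(2n+4) f_1 f_4) f^n_{2n-2} + (-(n-1)(n+4) f_1 f_3 + (2n-1)(2n+4) f_0 f_4) f^n_{2n-1} - 2n(n+4) f_0 f_3 f^n_{2n}. -/

import Mathlib

open Polynomial Finset

/-- Coefficient of a polynomial at an integer index, zero for negative indices. -/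
noncomputable def coeffZ {F : Type*} [Semiring F] (g : Polynomial F) (k : ℤ) : F :=
  if 0 ≤ k then g.coeff k.toNat else 0

/-- Quartic model, leftward extension: explicit formula for (2n+5)(2n+4)f₄² fⁿ_{2n-5}
in terms of fⁿ_{2n-3}, …, fⁿ_{2n}. -/
theorem quartic_left_extension {F : Type*} [Field F] [CharZero F]
    (f0 f1 f2 f3 f4 : F) (h : f0 * f4 ≠ 0) (f : Polynomial F)
    (hf : f = C f4 * X ^ 4 + C f3 * X ^ 3 + C f2 * X ^ 2 + C f1 * X + C f0)
    (n : ℕ) (hn : 3 ≤ n) :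
    (2 * (n : F) + 5) * (2 * (n : F) + 4) * f4 ^ 2 * coeffZ (f ^ n) (2 * (n : ℤ) - 5) =
      (((n : F) + 3) * ((n : F) + 4) * f3 ^ 2 - 3 * (2 * (n : F) + 4) * f2 * f4) *
          coeffZ (f ^ n) (2 * (n : ℤ) - 3)
      + (2 * ((n : F) + 4) * f2 * f3 + ((n : F) - 2) * (2 * (n : F) + 4) * f1 * f4) *
          coeffZ (f ^ n) (2 * (n : ℤ) - 2)
      + (-(((n : F) - 1) * ((n : F) + 4)) * f1 * f3
            + (2 * (n : F) - 1) * (2 * (n : F) + 4) * f0 * f4) *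
          coeffZ (f ^ n) (2 * (n : ℤ) - 1)
      - 2 * (n : F) * ((n : F) + 4) * f0 * f3 * coeffZ (f ^ n) (2 * (n : ℤ)) := by
  obtain ⟨m, rfl⟩ : ∃ m, n = m + 3 := ⟨n - 3, by omega⟩
  set n := m + 3 with hn3
  -- key ODE-type identity
  have key : f * derivative (f ^ n) = C ((n : F)) * (derivative f * f ^ n) := by
    rw [derivative_pow, show n - 1 = m + 2 from rfl, show n = m + 3 from rfl]
    ring
  -- derivative of f
  have hdf : derivative f =
      C (4 * f4) * X ^ 3 + C (3 * f3) * X ^ 2 + C (2 * f2) * X ^ 1 + C f1 * X ^ 0 := by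
    rw [hf]
    simp [derivative_pow]
    ring
  have hf' : f = C f4 * X ^ 4 + C f3 * X ^ 3 + C f2 * X ^ 2 + C f1 * X ^ 1 + C f0 * X ^ 0 := by
    rw [hf]; ring
  have hco : ∀ (a : F) (i j : ℕ) (p : Polynomial F),
      (C a * X ^ i * p).coeff (j + i) = a * p.coeff j := by
    intro a i j p
    rw [mul_assoc, coeff_C_mul, coeff_X_pow_mul]
  have hrec : ∀ k : ℕ,
      f4 * ((f ^ n).coeff (k + 1) * ((k : F) + 1))
      + f3 * ((f ^ n).coeff (k + 2) * ((k : F) + 2))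
      + f2 * ((f ^ n).coeff (k + 3) * ((k : F) + 3))
      + f1 * ((f ^ n).coeff (k + 4) * ((k : F) + 4))
      + f0 * ((f ^ n).coeff (k + 5) * ((k : F) + 5))
      = (n : F) * (4 * f4 * (f ^ n).coeff (k + 1) + 3 * f3 * (f ^ n).coeff (k + 2)
          + 2 * f2 * (f ^ n).coeff (k + 3) + f1 * (f ^ n).coeff (k + 4)) := by
    intro k
    have E : (f * derivative (f ^ n)).coeff (k + 4)
        = (C ((n : F)) * (derivative f * f ^ n)).coeff (k + 4) := by rw [key]
    rw [coeff_C_mul] at E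
    nth_rewrite 1 [hf'] at E
    nth_rewrite 1 [hdf] at E
    rw [add_mul, add_mul, add_mul, add_mul, coeff_add, coeff_add, coeff_add, coeff_add,
      add_mul, add_mul, add_mul, coeff_add, coeff_add, coeff_add] at E
    rw [show k + 4 = k + 0 + 4 from rfl] at E
    rw [hco f4 4 (k + 0)] at E
    rw [show k + 0 + 4 = k + 1 + 3 from rfl] at E
    rw [hco f3 3 (k + 1), hco (4 * f4) 3 (k + 1)] at E
    rw [show k + 1 + 3 = k + 2 + 2 from rfl] at E
    rw [hco f2 2 (k + 2), hco (3 * f3) 2 (k + 2)] at E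
    rw [show k + 2 + 2 = k + 3 + 1 from rfl] at E
    rw [hco f1 1 (k + 3), hco (2 * f2) 1 (k + 3)] at E
    rw [show k + 3 + 1 = k + 4 + 0 from rfl] at E
    rw [hco f0 0 (k + 4), hco f1 0 (k + 4)] at E
    simp only [coeff_derivative] at E
    push_cast at E ⊢
    linear_combination E
  -- turn coeffZ into coeff
  have cz : ∀ j : ℕ, coeffZ (f ^ n) ((j : ℤ)) = (f ^ n).coeff j := by
    intro j; simp [coeffZ]
  have c1 : coeffZ (f ^ n) (2 * (n : ℤ) - 5) = (f ^ n).coeff (2 * m + 1) := by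
    rw [show 2 * ((n : ℕ) : ℤ) - 5 = ((2 * m + 1 : ℕ) : ℤ) by push_cast [hn3]; ring, cz]
  have c3 : coeffZ (f ^ n) (2 * (n : ℤ) - 3) = (f ^ n).coeff (2 * m + 3) := by
    rw [show 2 * ((n : ℕ) : ℤ) - 3 = ((2 * m + 3 : ℕ) : ℤ) by push_cast [hn3]; ring, cz]
  have c4 : coeffZ (f ^ n) (2 * (n : ℤ) - 2) = (f ^ n).coeff (2 * m + 4) := by
    rw [show 2 * ((n : ℕ) : ℤ) - 2 = ((2 * m + 4 : ℕ) : ℤ) by push_cast [hn3]; ring, cz]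
  have c5 : coeffZ (f ^ n) (2 * (n : ℤ) - 1) = (f ^ n).coeff (2 * m + 5) := by
    rw [show 2 * ((n : ℕ) : ℤ) - 1 = ((2 * m + 5 : ℕ) : ℤ) by push_cast [hn3]; ring, cz]
  have c6 : coeffZ (f ^ n) (2 * (n : ℤ)) = (f ^ n).coeff (2 * m + 6) := by
    rw [show 2 * ((n : ℕ) : ℤ) = ((2 * m + 6 : ℕ) : ℤ) by push_cast [hn3]; ring, cz]
  rw [c1, c3, c4, c5, c6]
  have EA := hrec (2 * m)
  have EB := hrec (2 * m + 1)
  simp only [show 2 * m + 1 + 1 = 2 * m + 2 from rfl, show 2 * m + 1 + 2 = 2 * m + 3 from rfl,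
    show 2 * m + 1 + 3 = 2 * m + 4 from rfl, show 2 * m + 1 + 4 = 2 * m + 5 from rfl,
    show 2 * m + 1 + 5 = 2 * m + 6 from rfl] at EB
  push_cast [hn3] at EA EB ⊢
  linear_combination (-(2 * (m : F) + 10) * f4) * EA + ((m : F) + 7) * f3 * EB
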